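/- The Type II ℓ=3 graph P(p,s), regarded as a graph on the disjoint union of its variable nodes and constraint nodes, has girth exactly 6 and diameter exactly 3. -/

import Mathlib

open scoped Classical

namespace TypeII3

/-- Variable nodes of the Type II ℓ=3 graph: the root `r`, the nodes `(x,j)` (j ∈ F, with
`x` a formal symbol), and the nodes `(i,j)` (i, j ∈ F). -/
abbrev VN (F : Type*) := Unit ⊕ (F ⊕ (F × F))

/-- Constraint nodes of the Type II ℓ=3 graph: `c_x`, the nodes `c_i` (i ∈ F), and the
nodes `(a,b)'` (a, b ∈ F). -/
abbrev CN (F : Type*) := Unit ⊕ (F ⊕ (F × F))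

/-- Adjacency of the Type II ℓ=3 graph `P(p,s)`:
`r ~ c_x`; `r ~ c_i`; `c_x ~ (x,j)`; `c_i ~ (i,j)`; `(x,j) ~ (j,b)'` for every `b`; and
`(i,j) ~ (a, j + i·a)'` for every `a`. -/
def adj (F : Type*) [Field F] : VN F → CN F → Prop
  | Sum.inl _, Sum.inl _ => True                             -- r ~ c_x
  | Sum.inl _, Sum.inr (Sum.inl _) => True                   -- r ~ c_i
  | Sum.inl _, Sum.inr (Sum.inr _) => False
  | Sum.inr (Sum.inl _), Sum.inl _ => True                   -- (x,j) ~ c_x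
  | Sum.inr (Sum.inl _), Sum.inr (Sum.inl _) => False
  | Sum.inr (Sum.inl j), Sum.inr (Sum.inr (a, _)) => a = j   -- (x,j) ~ (j,b)'
  | Sum.inr (Sum.inr _), Sum.inl _ => False
  | Sum.inr (Sum.inr (i, _)), Sum.inr (Sum.inl k) => k = i   -- c_i ~ (i,j)
  | Sum.inr (Sum.inr (i, j)), Sum.inr (Sum.inr (a, b)) => b = j + i * a

end TypeII3

/-- The simple graph on the disjoint union `V ⊕ C` associated to a bipartite adjacency
relation between variable nodes `V` and constraint nodes `C`. -/
def bip {V C : Type*} (adj : V → C → Prop) : SimpleGraph (V ⊕ C) where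
  Adj x y :=
    (∃ v c, x = Sum.inl v ∧ y = Sum.inr c ∧ adj v c) ∨
    (∃ v c, x = Sum.inr c ∧ y = Sum.inl v ∧ adj v c)
  symm := by
    constructor
    rintro x y (⟨v, c, hx, hy, h⟩ | ⟨v, c, hx, hy, h⟩)
    · exact Or.inr ⟨v, c, hy, hx, h⟩
    · exact Or.inl ⟨v, c, hy, hx, h⟩
  loopless := by
    constructor
    rintro x (⟨v, c, hx, hy, h⟩ | ⟨v, c, hx, hy, h⟩) <;> subst hx <;> simp at hy

namespace TypeII3
variable {F : Type*} [Field F]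

lemma noC4 (v v' : VN F) (c c' : CN F)
    (hv : v ≠ v') (hc : c ≠ c') (h1 : adj F v c) (h2 : adj F v c')
    (h3 : adj F v' c) (h4 : adj F v' c') : False := by
  rcases v with _ | (j | ⟨i, j⟩) <;> rcases v' with _ | (j' | ⟨i', j'⟩) <;>
    rcases c with _ | (k | ⟨a, b⟩) <;> rcases c' with _ | (k' | ⟨a', b'⟩) <;>
    simp_all [adj]
  have h5 : (i - i') * (a - a') = 0 := by linear_combination h3 - h4
  rcases mul_eq_zero.1 h5 with h | h
  · have hii : i = i' := sub_eq_zero.1 h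
    subst hii
    exact hv rfl (by linear_combination h3)
  · exact hc (sub_eq_zero.1 h)

lemma commonCN (v v' : VN F) (h : v ≠ v') : ∃ c, adj F v c ∧ adj F v' c := by
  rcases v with _ | (j | ⟨i, j⟩) <;> rcases v' with _ | (j' | ⟨i', j'⟩)
  · exact absurd rfl h
  · exact ⟨Sum.inl (), trivial, trivial⟩
  · exact ⟨Sum.inr (Sum.inl i'), trivial, rfl⟩
  · exact ⟨Sum.inl (), trivial, trivial⟩
  · exact ⟨Sum.inl (), trivial, trivial⟩
  · exact ⟨Sum.inr (Sum.inr (j, j' + i' * j)), rfl, rfl⟩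
  · exact ⟨Sum.inr (Sum.inl i), rfl, trivial⟩
  · exact ⟨Sum.inr (Sum.inr (j', j + i * j')), rfl, rfl⟩
  · by_cases hii : i = i'
    · subst hii
      exact ⟨Sum.inr (Sum.inl i), rfl, rfl⟩
    · refine ⟨Sum.inr (Sum.inr ((j' - j) / (i - i'), j + i * ((j' - j) / (i - i')))), rfl, ?_⟩
      show j + i * _ = j' + i' * _
      have hne : i - i' ≠ 0 := sub_ne_zero.2 hii
      field_simp
      ring

lemma commonVN (c c' : CN F) (h : c ≠ c') : ∃ v, adj F v c ∧ adj F v c' := by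
  rcases c with _ | (k | ⟨a, b⟩) <;> rcases c' with _ | (k' | ⟨a', b'⟩)
  · exact absurd rfl h
  · exact ⟨Sum.inl (), trivial, trivial⟩
  · exact ⟨Sum.inr (Sum.inl a'), trivial, rfl⟩
  · exact ⟨Sum.inl (), trivial, trivial⟩
  · exact ⟨Sum.inl (), trivial, trivial⟩
  · exact ⟨Sum.inr (Sum.inr (k, b' - k * a')), rfl, by show _ = _ + _ * _; ring⟩
  · exact ⟨Sum.inr (Sum.inl a), rfl, trivial⟩
  · exact ⟨Sum.inr (Sum.inr (k', b - k' * a)), by show _ = _ + _ * _; ring, rfl⟩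
  · by_cases haa : a = a'
    · subst haa
      exact ⟨Sum.inr (Sum.inl a), rfl, rfl⟩
    · refine ⟨Sum.inr (Sum.inr ((b - b') / (a - a'), b - ((b - b') / (a - a')) * a)), ?_, ?_⟩
      · show b = _ + _ * _; ring
      · show b' = _ + _ * _
        have hne : a - a' ≠ 0 := sub_ne_zero.2 haa
        field_simp
        ring

lemma nbr (c : CN F) : ∃ v, adj F v c := by
  rcases c with _ | (k | ⟨a, b⟩)
  · exact ⟨Sum.inl (), trivial⟩
  · exact ⟨Sum.inl (), trivial⟩
  · exact ⟨Sum.inr (Sum.inl a), rfl⟩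

def side : VN F ⊕ CN F → ZMod 2 := Sum.elim (fun _ => 0) (fun _ => 1)

lemma adj_side {x y : VN F ⊕ CN F} (h : (bip (adj F)).Adj x y) : side y = side x + 1 := by
  rcases h with ⟨v, c, rfl, rfl, -⟩ | ⟨v, c, rfl, rfl, -⟩ <;> simp [side] <;> decide

lemma walk_parity {x y : VN F ⊕ CN F} (w : (bip (adj F)).Walk x y) :
    (w.length : ZMod 2) = side x + side y := by
  induction w with
  | nil =>
    simp only [SimpleGraph.Walk.length_nil, Nat.cast_zero]
    rename_i z
    rcases z with v | c <;> simp [side] <;> decide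
  | cons h p ih =>
    rw [SimpleGraph.Walk.length_cons, Nat.cast_add, Nat.cast_one, ih, adj_side h]
    ring_nf
    rw [show (2 : ZMod 2) = 0 by decide]
    ring

lemma no_four_cycle (a : VN F ⊕ CN F) (w : (bip (adj F)).Walk a a) (hc : w.IsCycle) :
    w.length ≠ 4 := by
  intro hl
  cases w with
  | nil => simp at hl
  | cons h1 p =>
    cases p with
    | nil => simp at hl
    | cons h2 p =>
      cases p with
      | nil => simp at hl
      | cons h3 p =>
        cases p with
        | nil => simp at hl
        | cons h4 p =>
          cases p with
          | cons h5 p => simp at hl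
          | nil =>
            rename_i x1 x2 x3
            have hnd := hc.support_nodup
            simp only [SimpleGraph.Walk.support_cons, SimpleGraph.Walk.support_nil,
              List.tail_cons, List.nodup_cons, List.mem_cons, List.mem_singleton,
              List.not_mem_nil, or_false, List.nodup_nil, and_true, not_or] at hnd
            obtain ⟨⟨h12, h13, h1a⟩, ⟨h23, h2a⟩, h3a, -⟩ := hnd
            rcases a with u | u <;> rcases x1 with y1 | y1 <;> rcases x2 with y2 | y2 <;>
              rcases x3 with y3 | y3 <;>
              simp only [bip, Sum.inl.injEq, Sum.inr.injEq, exists_eq_left,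
                exists_and_left, exists_eq_left', false_and, and_false, exists_false,
                or_false, false_or, exists_eq_left, reduceCtorEq, exists_const] at h1 h2 h3 h4
            · exact noC4 u y2 y1 y3 (fun he => h2a (by rw [he])) (fun he => h13 (by rw [he]))
                h1 h4 h2 h3
            · exact noC4 y1 y3 u y2 (fun he => h13 (by rw [he])) (fun he => h2a (by rw [he]))
                h1 h2 h4 h3

lemma six_le_cycle (a : VN F ⊕ CN F) (w : (bip (adj F)).Walk a a) (hc : w.IsCycle) :
    6 ≤ w.length := by
  have h3 := hc.three_le_length
  have h4 := no_four_cycle a w hc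
  have heven : 2 ∣ w.length := by
    have := walk_parity w
    have hz : (w.length : ZMod 2) = 0 := by
      rw [this]
      rcases a with u | u <;> simp [side] <;> decide
    exact (ZMod.natCast_eq_zero_iff _ _).1 hz
  omega

def sixCycle : (bip (adj F)).Walk (Sum.inl (Sum.inl ())) (Sum.inl (Sum.inl ())) :=
  .cons (show (bip (adj F)).Adj _ _ from Or.inl ⟨Sum.inl (), Sum.inl (), rfl, rfl, trivial⟩) <|
  .cons (show (bip (adj F)).Adj _ _ from Or.inr ⟨Sum.inr (Sum.inl (0 : F)), Sum.inl (), rfl, rfl, trivial⟩) <|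
  .cons (show (bip (adj F)).Adj _ _ from Or.inl ⟨Sum.inr (Sum.inl (0 : F)), Sum.inr (Sum.inr ((0 : F), (0 : F))), rfl, rfl, rfl⟩) <|
  .cons (show (bip (adj F)).Adj _ _ from Or.inr ⟨Sum.inr (Sum.inr ((0 : F), (0 : F))), Sum.inr (Sum.inr ((0 : F), (0 : F))), rfl,
      rfl, by show (0 : F) = 0 + 0 * 0; ring⟩) <|
  .cons (show (bip (adj F)).Adj _ _ from Or.inl ⟨Sum.inr (Sum.inr ((0 : F), (0 : F))), Sum.inr (Sum.inl (0 : F)), rfl, rfl, rfl⟩) <|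
  .cons (show (bip (adj F)).Adj _ _ from Or.inr ⟨Sum.inl (), Sum.inr (Sum.inl (0 : F)), rfl, rfl, trivial⟩) .nil

lemma sixCycle_isCycle : (sixCycle (F := F)).IsCycle := by
  constructor
  · constructor
    · constructor
      simp [sixCycle, SimpleGraph.Walk.edges_cons, List.nodup_cons]
    · simp [sixCycle]
  · simp [sixCycle, SimpleGraph.Walk.support_cons, List.nodup_cons]

lemma sixCycle_length : (sixCycle (F := F)).length = 6 := rfl

lemma edist_inl_inl (v v' : VN F) :
    (bip (adj F)).edist (Sum.inl v) (Sum.inl v') ≤ 2 := by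
  by_cases h : v = v'
  · subst h; simp
  · obtain ⟨c, h1, h2⟩ := commonCN v v' h
    exact (SimpleGraph.edist_le
      (.cons (show (bip (adj F)).Adj _ _ from Or.inl ⟨v, c, rfl, rfl, h1⟩)
        (.cons (show (bip (adj F)).Adj _ _ from Or.inr ⟨v', c, rfl, rfl, h2⟩) .nil))).trans (by simp)

lemma edist_inr_inr (c c' : CN F) :
    (bip (adj F)).edist (Sum.inr c) (Sum.inr c') ≤ 2 := by
  by_cases h : c = c'
  · subst h; simp
  · obtain ⟨v, h1, h2⟩ := commonVN c c' h
    exact (SimpleGraph.edist_le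
      (.cons (show (bip (adj F)).Adj _ _ from Or.inr ⟨v, c, rfl, rfl, h1⟩)
        (.cons (show (bip (adj F)).Adj _ _ from Or.inl ⟨v, c', rfl, rfl, h2⟩) .nil))).trans (by simp)

lemma edist_inl_inr (v : VN F) (c : CN F) :
    (bip (adj F)).edist (Sum.inl v) (Sum.inr c) ≤ 3 := by
  obtain ⟨v', hv'⟩ := nbr c
  calc (bip (adj F)).edist (Sum.inl v) (Sum.inr c)
      ≤ (bip (adj F)).edist (Sum.inl v) (Sum.inl v') +
        (bip (adj F)).edist (Sum.inl v') (Sum.inr c) := SimpleGraph.edist_triangle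
    _ ≤ 2 + 1 := by
        refine add_le_add (edist_inl_inl v v') ?_
        exact (SimpleGraph.edist_le
          (.cons (show (bip (adj F)).Adj _ _ from Or.inl ⟨v', c, rfl, rfl, hv'⟩) .nil)).trans (by simp)
    _ = 3 := by norm_num

lemma ediam_le_three : (bip (adj F)).ediam ≤ 3 := by
  refine SimpleGraph.ediam_le_of_edist_le fun u v => ?_
  rcases u with a | a <;> rcases v with b | b
  · exact (edist_inl_inl a b).trans (by norm_num)
  · exact edist_inl_inr a b
  · rw [SimpleGraph.edist_comm]; exact edist_inl_inr b a
  · exact (edist_inr_inr a b).trans (by norm_num)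

lemma three_le_edist :
    (3 : ℕ∞) ≤ (bip (adj F)).edist (Sum.inl (Sum.inl ()))
        (Sum.inr (Sum.inr (Sum.inr ((0 : F), (0 : F))))) := by
  rw [SimpleGraph.edist_eq_sInf]
  refine le_sInf ?_
  rintro x ⟨w, rfl⟩
  have hodd : ¬ 2 ∣ w.length := by
    intro hdvd
    have h1 := walk_parity w
    simp [side] at h1
    rw [(ZMod.natCast_eq_zero_iff _ _).2 hdvd] at h1
    exact one_ne_zero h1.symm
  have hne1 : w.length ≠ 1 := by
    intro h1
    have := w.adj_of_length_eq_one h1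
    rcases this with ⟨v, c, hx, hy, h⟩ | ⟨v, c, hx, hy, h⟩
    · cases hx; cases hy; exact h
    · exact (by simp at hx)
  have : 3 ≤ w.length := by omega
  show (3 : ℕ∞) ≤ (w.length : ℕ∞)
  exact_mod_cast this

end TypeII3

theorem stmt_9 (p s : ℕ) (hp : p.Prime) (hs : 0 < s)
    (F : Type*) [Field F] [Fintype F] (hF : Fintype.card F = p ^ s) :
    -- girth exactly 6 and diameter exactly 3
    (bip (TypeII3.adj F)).egirth = 6 ∧ (bip (TypeII3.adj F)).ediam = 3 := by
  constructor
  · refine le_antisymm ?_ ?_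
    · have h := TypeII3.sixCycle_isCycle (F := F)
      have hle : (bip (TypeII3.adj F)).egirth ≤ ((TypeII3.sixCycle (F := F)).length : ℕ∞) := by
        simp only [SimpleGraph.egirth]
        exact iInf_le_of_le _ (iInf_le_of_le TypeII3.sixCycle (iInf_le _ h))
      simpa [TypeII3.sixCycle_length] using hle
    · rw [SimpleGraph.le_egirth]
      intro a w hc
      have h6 := TypeII3.six_le_cycle a w hc
      exact_mod_cast h6
  · exact le_antisymm TypeII3.ediam_le_three
      (TypeII3.three_le_edist.trans SimpleGraph.edist_le_ediam)
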